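/- Van Loan's rearrangement identity: there exists a rearrangement (shuffle) map R from (m₁m₂)×(n₁n₂) matrices to (m₁n₁)×(m₂n₂) matrices, linear and Frobenius-norm preserving, such that R(A ⊗ B) = vec(A) vec(B)ᵀ for all m₁×n₁ matrices A and m₂×n₂ matrices B. -/

import Mathlib

open Matrix
open scoped Kronecker

/-- The Frobenius norm of a real matrix. -/
noncomputable def frob {a b : Type*} [Fintype a] [Fintype b] (M : Matrix a b ℝ) : ℝ :=
  Real.sqrt (∑ i, ∑ j, (M i j) ^ 2)

/-- Van Loan's rearrangement: there is a linear, Frobenius-norm-preserving map `R`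
from `(m₁m₂)×(n₁n₂)` matrices to `(m₁n₁)×(m₂n₂)` matrices sending every Kronecker
product `A ⊗ B` to the outer product `vec(A) vec(B)ᵀ`, whose `((i,j),(k,l))` entry
is `A i j * B k l`. -/
theorem vanLoan_rearrangement (m₁ n₁ m₂ n₂ : ℕ) :
    ∃ R : Matrix (Fin m₁ × Fin m₂) (Fin n₁ × Fin n₂) ℝ →ₗ[ℝ]
          Matrix (Fin m₁ × Fin n₁) (Fin m₂ × Fin n₂) ℝ,
      (∀ M, frob (R M) = frob M) ∧
      (∀ (A : Matrix (Fin m₁) (Fin n₁) ℝ) (B : Matrix (Fin m₂) (Fin n₂) ℝ),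
        R (A ⊗ₖ B) = Matrix.of fun x y => A x.1 x.2 * B y.1 y.2) := by
  refine ⟨{ toFun := fun M => Matrix.of fun x y => M (x.1, y.1) (x.2, y.2)
            map_add' := fun M N => rfl
            map_smul' := fun c M => rfl }, ?_, ?_⟩
  · intro M
    unfold frob
    congr 1
    rw [← Finset.sum_product', ← Finset.sum_product']
    rw [← Finset.univ_product_univ]
    apply Finset.sum_nbij' (fun p => ((p.1.1, p.2.1), (p.1.2, p.2.2)))
      (fun p => ((p.1.1, p.2.1), (p.1.2, p.2.2))) <;> simp <;> intros <;> rfl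
  · intro A B
    ext ⟨i, j⟩ ⟨k, l⟩
    simp [Matrix.kroneckerMap_apply, mul_comm]
    rfl
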